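/- Under exchangeability A ⫫ (Y[0],Y[1]) | X and consistency, the representation-induced confounding bias decomposes as: E(Y[1]−Y[0] | Φ(X)=φ) − [E(Y | A=1, Φ(X)=φ) − E(Y | A=0, Φ(X)=φ)] = Σ_{a∈{0,1}} (−1)^{1−a} Σ_x μ_a(x) [P(X=x | Φ(X)=φ) − P(X=x | A=a, Φ(X)=φ)], where μ_a(x) = E(Y | A=a, X=x). -/

import Mathlib

open scoped Classical

/-- Probability of an event under a finite mass function on the sample space `Ω`. -/
noncomputable def pr {Ω : Type*} [Fintype Ω] (p : Ω → ℝ) (E : Ω → Prop) : ℝ :=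
  ∑ ω, if E ω then p ω else 0

/-- Conditional expectation `E(Y | E)` under a finite mass function. -/
noncomputable def cexp {Ω : Type*} [Fintype Ω] (p : Ω → ℝ) (Y : Ω → ℝ) (E : Ω → Prop) : ℝ :=
  (∑ ω, if E ω then p ω * Y ω else 0) / pr p E

/-- Unnormalized expectation `E[Y ; E]`. -/
noncomputable def wsum {Ω : Type*} [Fintype Ω] (p : Ω → ℝ) (Y : Ω → ℝ) (E : Ω → Prop) : ℝ :=
  ∑ ω, if E ω then p ω * Y ω else 0

section Aux
variable {Ω : Type*} [Fintype Ω] (p : Ω → ℝ)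

lemma cexp_eq (Y : Ω → ℝ) (E : Ω → Prop) : cexp p Y E = wsum p Y E / pr p E := rfl

lemma pr_congr {E F : Ω → Prop} (h : ∀ ω, E ω ↔ F ω) : pr p E = pr p F := by
  unfold pr; exact Finset.sum_congr rfl (fun ω _ => by simp [h ω])

lemma wsum_congr (Y : Ω → ℝ) {E F : Ω → Prop} (h : ∀ ω, E ω ↔ F ω) :
    wsum p Y E = wsum p Y F := by
  unfold wsum; exact Finset.sum_congr rfl (fun ω _ => by simp [h ω])

lemma wsum_congr' {Y Z : Ω → ℝ} {E F : Ω → Prop} (h : ∀ ω, E ω ↔ F ω)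
    (hy : ∀ ω, F ω → Y ω = Z ω) : wsum p Y E = wsum p Z F := by
  unfold wsum
  refine Finset.sum_congr rfl (fun ω _ => ?_)
  by_cases hE : F ω
  · simp [hE, (h ω).mpr hE, hy ω hE]
  · have : ¬ E ω := fun c => hE ((h ω).mp c)
    simp [hE, this]

lemma pr_nonneg (hp : ∀ ω, 0 ≤ p ω) (E : Ω → Prop) : 0 ≤ pr p E := by
  unfold pr
  exact Finset.sum_nonneg (fun ω _ => by split <;> [exact hp ω; exact le_rfl])

lemma pr_mono (hp : ∀ ω, 0 ≤ p ω) {E F : Ω → Prop} (h : ∀ ω, E ω → F ω) :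
    pr p E ≤ pr p F := by
  unfold pr
  refine Finset.sum_le_sum (fun ω _ => ?_)
  by_cases hE : E ω
  · simp [hE, h ω hE]
  · simp [hE]; split <;> [exact hp ω; exact le_rfl]

/-- If `P(E) = 0`, every ω in `E` has zero mass. -/
lemma pr_zero_mass (hp : ∀ ω, 0 ≤ p ω) {E : Ω → Prop} (h : pr p E = 0)
    {ω : Ω} (hω : E ω) : p ω = 0 := by
  unfold pr at h
  have := (Finset.sum_eq_zero_iff_of_nonneg
    (fun ω _ => by split <;> [exact hp ω; exact le_rfl])).mp h ω (Finset.mem_univ ω)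
  simpa [hω] using this

lemma wsum_zero (hp : ∀ ω, 0 ≤ p ω) {E : Ω → Prop} (h : pr p E = 0) (Y : Ω → ℝ) :
    wsum p Y E = 0 := by
  unfold wsum
  refine Finset.sum_eq_zero (fun ω _ => ?_)
  by_cases hE : E ω
  · simp [hE, pr_zero_mass p hp h hE]
  · simp [hE]

lemma wsum_sub (Y Z : Ω → ℝ) (E : Ω → Prop) :
    wsum p (fun ω => Y ω - Z ω) E = wsum p Y E - wsum p Z E := by
  unfold wsum
  rw [← Finset.sum_sub_distrib]
  exact Finset.sum_congr rfl (fun ω _ => by split <;> ring)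

/-- Fiber decomposition over values of `X`. -/
lemma fiber_wsum {𝒳 : Type*} [Fintype 𝒳] (X : Ω → 𝒳) (C : 𝒳 → Prop) (E : Ω → Prop)
    (f : Ω → ℝ) :
    wsum p f (fun ω => E ω ∧ C (X ω))
      = ∑ x, if C x then wsum p f (fun ω => E ω ∧ X ω = x) else 0 := by
  have key : ∀ x : 𝒳, (if C x then wsum p f (fun ω => E ω ∧ X ω = x) else 0)
      = wsum p f (fun ω => (E ω ∧ X ω = x) ∧ C x) := by
    intro x
    split_ifs with h
    · exact wsum_congr p f (fun ω => by tauto)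
    · symm; unfold wsum; exact Finset.sum_eq_zero (fun ω _ => by simp [h])
  rw [Finset.sum_congr rfl (fun x _ => key x)]
  unfold wsum
  rw [Finset.sum_comm]
  refine Finset.sum_congr rfl (fun ω _ => ?_)
  by_cases hE : E ω
  · simp [hE, ite_and]
  · simp [hE]

/-- Rewrite a weighted sum over an event as a sum over the values of `(Y0, Y1)`. -/
lemma wsum_eq (E : Ω → Prop) (Y0 Y1 : Ω → ℝ) (g : ℝ × ℝ → ℝ) :
    wsum p (fun ω => g (Y0 ω, Y1 ω)) E
      = ∑ v ∈ Finset.image (fun ω => (Y0 ω, Y1 ω)) Finset.univ,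
          g v * pr p (fun ω => E ω ∧ Y0 ω = v.1 ∧ Y1 ω = v.2) := by
  unfold wsum pr
  simp_rw [Finset.mul_sum]
  rw [Finset.sum_comm]
  refine Finset.sum_congr rfl (fun ω _ => ?_)
  have hmem : (Y0 ω, Y1 ω) ∈ Finset.image (fun ω => (Y0 ω, Y1 ω)) Finset.univ :=
    Finset.mem_image_of_mem _ (Finset.mem_univ ω)
  rw [Finset.sum_eq_single_of_mem _ hmem]
  · by_cases hE : E ω <;> simp [hE, mul_comm]
  · intro v hv hne
    have : ¬(Y0 ω = v.1 ∧ Y1 ω = v.2) := by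
      rintro ⟨h1, h2⟩; exact hne (Prod.ext h1.symm h2.symm)
    simp [this]

end Aux

section Key2
variable {Ω 𝒳 : Type*} [Fintype Ω]

lemma key_exch (p : Ω → ℝ) (X : Ω → 𝒳) (A : Ω → ℕ) (Y0 Y1 : Ω → ℝ)
    (hexch : ∀ (x : 𝒳) (a : ℕ) (y0 y1 : ℝ),
      pr p (fun ω => A ω = a ∧ Y0 ω = y0 ∧ Y1 ω = y1 ∧ X ω = x) * pr p (fun ω => X ω = x)
        = pr p (fun ω => A ω = a ∧ X ω = x) *
          pr p (fun ω => Y0 ω = y0 ∧ Y1 ω = y1 ∧ X ω = x))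
    (x : 𝒳) (a : ℕ) (g : ℝ × ℝ → ℝ) :
    wsum p (fun ω => g (Y0 ω, Y1 ω)) (fun ω => A ω = a ∧ X ω = x) * pr p (fun ω => X ω = x)
      = pr p (fun ω => A ω = a ∧ X ω = x)
          * wsum p (fun ω => g (Y0 ω, Y1 ω)) (fun ω => X ω = x) := by
  rw [wsum_eq p (fun ω => A ω = a ∧ X ω = x) Y0 Y1 g,
      wsum_eq p (fun ω => X ω = x) Y0 Y1 g, Finset.sum_mul, Finset.mul_sum]
  refine Finset.sum_congr rfl (fun v _ => ?_)
  have h1 : pr p (fun ω => (A ω = a ∧ X ω = x) ∧ Y0 ω = v.1 ∧ Y1 ω = v.2)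
      = pr p (fun ω => A ω = a ∧ Y0 ω = v.1 ∧ Y1 ω = v.2 ∧ X ω = x) :=
    pr_congr p (fun ω => by tauto)
  have h2 : pr p (fun ω => (X ω = x) ∧ Y0 ω = v.1 ∧ Y1 ω = v.2)
      = pr p (fun ω => Y0 ω = v.1 ∧ Y1 ω = v.2 ∧ X ω = x) :=
    pr_congr p (fun ω => by tauto)
  rw [h1, h2]
  linear_combination g v * hexch x a v.1 v.2

end Key2

lemma alg {W q r S Pphi Pa : ℝ} (hr : r ≠ 0) (hphi : Pphi ≠ 0) (ha : Pa ≠ 0)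
    (h : W * q = r * S) : (W / r) * (q / Pphi - r / Pa) = S / Pphi - W / Pa := by
  field_simp
  linear_combination Pa * h

/-- Under exchangeability `A ⫫ (Y[0],Y[1]) | X` and consistency, the representation-induced
confounding bias decomposes as
`E(Y[1]−Y[0] | Φ(X)=φ) − [E(Y | A=1, Φ(X)=φ) − E(Y | A=0, Φ(X)=φ)]
  = Σ_{a∈{0,1}} (−1)^{1−a} Σ_x μ_a(x) [P(X=x | Φ(X)=φ) − P(X=x | A=a, Φ(X)=φ)]`,
where `μ_a(x) = E(Y | A=a, X=x)` and the sum over `x` ranges over the fiber of `φ`. -/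
theorem ricb_decomposition
    {Ω 𝒳 𝒵 : Type*} [Fintype Ω] [Fintype 𝒳]
    (p : Ω → ℝ) (hp : ∀ ω, 0 ≤ p ω) (hsum : ∑ ω, p ω = 1)
    (X : Ω → 𝒳) (A : Ω → ℕ) (hA : ∀ ω, A ω ≤ 1)
    (Y0 Y1 Y : Ω → ℝ) (Φ : 𝒳 → 𝒵)
    (hexch : ∀ (x : 𝒳) (a : ℕ) (y0 y1 : ℝ),
      pr p (fun ω => A ω = a ∧ Y0 ω = y0 ∧ Y1 ω = y1 ∧ X ω = x) * pr p (fun ω => X ω = x)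
        = pr p (fun ω => A ω = a ∧ X ω = x) *
          pr p (fun ω => Y0 ω = y0 ∧ Y1 ω = y1 ∧ X ω = x))
    (hcons : ∀ ω, Y ω = if A ω = 1 then Y1 ω else Y0 ω)
    (hoverlap : ∀ x : 𝒳, 0 < pr p (fun ω => X ω = x) →
      0 < pr p (fun ω => A ω = 1 ∧ X ω = x) ∧ 0 < pr p (fun ω => A ω = 0 ∧ X ω = x))
    (φ : 𝒵)
    (hφ1 : 0 < pr p (fun ω => A ω = 1 ∧ Φ (X ω) = φ))
    (hφ0 : 0 < pr p (fun ω => A ω = 0 ∧ Φ (X ω) = φ)) :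
    cexp p (fun ω => Y1 ω - Y0 ω) (fun ω => Φ (X ω) = φ)
        - (cexp p Y (fun ω => A ω = 1 ∧ Φ (X ω) = φ)
            - cexp p Y (fun ω => A ω = 0 ∧ Φ (X ω) = φ))
      = ∑ a ∈ Finset.range 2, (-1 : ℝ) ^ (1 - a) *
          ∑ x : 𝒳, if Φ x = φ ∧ 0 < pr p (fun ω => X ω = x) then
              cexp p Y (fun ω => A ω = a ∧ X ω = x) *
                (pr p (fun ω => X ω = x) / pr p (fun ω => Φ (X ω) = φ)
                  - pr p (fun ω => A ω = a ∧ X ω = x)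
                      / pr p (fun ω => A ω = a ∧ Φ (X ω) = φ))
            else 0 := by
  classical
  have hPφ : 0 < pr p (fun ω => Φ (X ω) = φ) :=
    lt_of_lt_of_le hφ1 (pr_mono p hp (fun ω h => h.2))
  have hcons1 : ∀ x : 𝒳, wsum p Y (fun ω => A ω = 1 ∧ X ω = x)
      = wsum p (fun ω => Prod.snd (Y0 ω, Y1 ω)) (fun ω => A ω = 1 ∧ X ω = x) :=
    fun x => wsum_congr' p (fun ω => Iff.rfl) (fun ω h => by rw [hcons ω, if_pos h.1])
  have hcons0 : ∀ x : 𝒳, wsum p Y (fun ω => A ω = 0 ∧ X ω = x)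
      = wsum p (fun ω => Prod.fst (Y0 ω, Y1 ω)) (fun ω => A ω = 0 ∧ X ω = x) :=
    fun x => wsum_congr' p (fun ω => Iff.rfl)
      (fun ω h => by rw [hcons ω, if_neg (by simp [h.1])])
  have hk1 : ∀ x : 𝒳, wsum p Y (fun ω => A ω = 1 ∧ X ω = x) * pr p (fun ω => X ω = x)
      = pr p (fun ω => A ω = 1 ∧ X ω = x) * wsum p Y1 (fun ω => X ω = x) := by
    intro x
    rw [hcons1 x]
    exact key_exch p X A Y0 Y1 hexch x 1 Prod.snd
  have hk0 : ∀ x : 𝒳, wsum p Y (fun ω => A ω = 0 ∧ X ω = x) * pr p (fun ω => X ω = x)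
      = pr p (fun ω => A ω = 0 ∧ X ω = x) * wsum p Y0 (fun ω => X ω = x) := by
    intro x
    rw [hcons0 x]
    exact key_exch p X A Y0 Y1 hexch x 0 Prod.fst
  have key1 : ∀ x : 𝒳,
      (if Φ x = φ ∧ 0 < pr p (fun ω => X ω = x) then
          cexp p Y (fun ω => A ω = 1 ∧ X ω = x) *
            (pr p (fun ω => X ω = x) / pr p (fun ω => Φ (X ω) = φ)
              - pr p (fun ω => A ω = 1 ∧ X ω = x)
                  / pr p (fun ω => A ω = 1 ∧ Φ (X ω) = φ))
        else 0)
      = (if Φ x = φ then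
          wsum p Y1 (fun ω => X ω = x) / pr p (fun ω => Φ (X ω) = φ)
            - wsum p Y (fun ω => A ω = 1 ∧ X ω = x)
                / pr p (fun ω => A ω = 1 ∧ Φ (X ω) = φ)
        else 0) := by
    intro x
    by_cases hfib : Φ x = φ
    · by_cases hpos : 0 < pr p (fun ω => X ω = x)
      · rw [if_pos ⟨hfib, hpos⟩, if_pos hfib, cexp_eq]
        exact alg (ne_of_gt (hoverlap x hpos).1) (ne_of_gt hPφ) (ne_of_gt hφ1) (hk1 x)
      · have hq0 : pr p (fun ω => X ω = x) = 0 :=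
          le_antisymm (not_lt.mp hpos) (pr_nonneg p hp _)
        have hr0 : pr p (fun ω => A ω = 1 ∧ X ω = x) = 0 :=
          le_antisymm (hq0 ▸ pr_mono p hp (fun ω h => h.2)) (pr_nonneg p hp _)
        rw [if_neg (fun h => hpos h.2), if_pos hfib, wsum_zero p hp hq0 Y1,
            wsum_zero p hp hr0 Y]
        simp
    · rw [if_neg (fun h => hfib h.1), if_neg hfib]
  have key0 : ∀ x : 𝒳,
      (if Φ x = φ ∧ 0 < pr p (fun ω => X ω = x) then
          cexp p Y (fun ω => A ω = 0 ∧ X ω = x) *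
            (pr p (fun ω => X ω = x) / pr p (fun ω => Φ (X ω) = φ)
              - pr p (fun ω => A ω = 0 ∧ X ω = x)
                  / pr p (fun ω => A ω = 0 ∧ Φ (X ω) = φ))
        else 0)
      = (if Φ x = φ then
          wsum p Y0 (fun ω => X ω = x) / pr p (fun ω => Φ (X ω) = φ)
            - wsum p Y (fun ω => A ω = 0 ∧ X ω = x)
                / pr p (fun ω => A ω = 0 ∧ Φ (X ω) = φ)
        else 0) := by
    intro x
    by_cases hfib : Φ x = φ
    · by_cases hpos : 0 < pr p (fun ω => X ω = x)
      · rw [if_pos ⟨hfib, hpos⟩, if_pos hfib, cexp_eq]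
        exact alg (ne_of_gt (hoverlap x hpos).2) (ne_of_gt hPφ) (ne_of_gt hφ0) (hk0 x)
      · have hq0 : pr p (fun ω => X ω = x) = 0 :=
          le_antisymm (not_lt.mp hpos) (pr_nonneg p hp _)
        have hr0 : pr p (fun ω => A ω = 0 ∧ X ω = x) = 0 :=
          le_antisymm (hq0 ▸ pr_mono p hp (fun ω h => h.2)) (pr_nonneg p hp _)
        rw [if_neg (fun h => hpos h.2), if_pos hfib, wsum_zero p hp hq0 Y0,
            wsum_zero p hp hr0 Y]
        simp
    · rw [if_neg (fun h => hfib h.1), if_neg hfib]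
  have n1 : wsum p Y (fun ω => A ω = 1 ∧ Φ (X ω) = φ)
      = ∑ x, if Φ x = φ then wsum p Y (fun ω => A ω = 1 ∧ X ω = x) else 0 :=
    fiber_wsum p X (fun x => Φ x = φ) (fun ω => A ω = 1) Y
  have n0 : wsum p Y (fun ω => A ω = 0 ∧ Φ (X ω) = φ)
      = ∑ x, if Φ x = φ then wsum p Y (fun ω => A ω = 0 ∧ X ω = x) else 0 :=
    fiber_wsum p X (fun x => Φ x = φ) (fun ω => A ω = 0) Y
  have nfull : wsum p (fun ω => Y1 ω - Y0 ω) (fun ω => Φ (X ω) = φ)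
      = ∑ x, if Φ x = φ then
          (wsum p Y1 (fun ω => X ω = x) - wsum p Y0 (fun ω => X ω = x)) else 0 := by
    have h1 : wsum p (fun ω => Y1 ω - Y0 ω) (fun ω => Φ (X ω) = φ)
        = wsum p (fun ω => Y1 ω - Y0 ω) (fun ω => True ∧ Φ (X ω) = φ) :=
      wsum_congr p _ (fun ω => by tauto)
    rw [h1, fiber_wsum p X (fun x => Φ x = φ) (fun _ => True) _]
    refine Finset.sum_congr rfl (fun x _ => ?_)
    split_ifs with h
    · rw [wsum_congr p _ (fun ω => (by tauto : (True ∧ X ω = x) ↔ (X ω = x))), wsum_sub]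
    · rfl
  rw [cexp_eq, cexp_eq, cexp_eq, nfull, n1, n0,
      Finset.sum_range_succ, Finset.sum_range_succ, Finset.sum_range_zero,
      Finset.sum_congr rfl (fun x _ => key1 x), Finset.sum_congr rfl (fun x _ => key0 x)]
  simp only [Nat.sub_zero, Nat.sub_self, pow_one, pow_zero, one_mul, neg_one_mul, zero_add]
  rw [Finset.sum_div, Finset.sum_div, Finset.sum_div, neg_add_eq_sub,
      ← Finset.sum_sub_distrib, ← Finset.sum_sub_distrib, ← Finset.sum_sub_distrib]
  refine Finset.sum_congr rfl (fun x _ => ?_)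
  split_ifs with h
  · ring
  · simp
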